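/- Let M be the 4×4 rational matrix M = [[6, −20/3, 5, −5], [−1, 1, 0, 0], [1/2, −1, 1, 0], [−1/6, 1/2, −1, 1]]. Then the characteristic polynomial of M is x⁴ − 9x³ + 11x² − 9x + 1, and the eigenvalues of M over ℂ are exactly the four distinct numbers λ₁ = (9 + 3√5 + √(110 + 54√5))/4, λ₂ = (9 − 3√5 + i√(−110 + 54√5))/4, λ₃ = (9 − 3√5 − i√(−110 + 54√5))/4, and λ₄ = (9 + 3√5 − √(110 + 54√5))/4. Moreover λ₁ is real with λ₁ > 1, λ₁·λ₄ = 1, λ₂·λ₃ = 1, and λ₁ is the spectral radius of M. -/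

import Mathlib

/-!
STATEMENT 15: The explicit 4×4 rational matrix `M` (of `T_O ∘ (−⊗O(−1))` on the even
cohomology of a quintic threefold) has characteristic polynomial `x⁴ − 9x³ + 11x² − 9x + 1`,
its eigenvalues over `ℂ` are exactly the four distinct numbers `λ₁, λ₂, λ₃, λ₄` listed
below, `λ₁` is real with `λ₁ > 1`, `λ₁λ₄ = 1`, `λ₂λ₃ = 1`, and `λ₁` is the spectral radius.
-/

open Matrix Polynomial

noncomputable section

/-- The matrix `M`. -/
def Mquintic : Matrix (Fin 4) (Fin 4) ℚ :=
  !![6, -20/3, 5, -5;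
     -1, 1, 0, 0;
     1/2, -1, 1, 0;
     -1/6, 1/2, -1, 1]

/-- `λ₁ = (9 + 3√5 + √(110 + 54√5))/4`. -/
def lam1 : ℂ := (((9 + 3 * Real.sqrt 5 + Real.sqrt (110 + 54 * Real.sqrt 5)) / 4 : ℝ) : ℂ)

/-- `λ₂ = (9 − 3√5 + i√(−110 + 54√5))/4`. -/
def lam2 : ℂ := (((9 - 3 * Real.sqrt 5) / 4 : ℝ) : ℂ) +
  ((Real.sqrt (-110 + 54 * Real.sqrt 5) / 4 : ℝ) : ℂ) * Complex.I

/-- `λ₃ = (9 − 3√5 − i√(−110 + 54√5))/4`. -/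
def lam3 : ℂ := (((9 - 3 * Real.sqrt 5) / 4 : ℝ) : ℂ) -
  ((Real.sqrt (-110 + 54 * Real.sqrt 5) / 4 : ℝ) : ℂ) * Complex.I

/-- `λ₄ = (9 + 3√5 − √(110 + 54√5))/4`. -/
def lam4 : ℂ := (((9 + 3 * Real.sqrt 5 - Real.sqrt (110 + 54 * Real.sqrt 5)) / 4 : ℝ) : ℂ)

namespace QuinticAux

set_option maxHeartbeats 1000000 in
lemma mem_spectrum_iff_root (A : Matrix (Fin 4) (Fin 4) ℂ) (μ : ℂ) :
    μ ∈ spectrum ℂ A ↔ A.charpoly.eval μ = 0 := by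
  rw [spectrum.mem_iff, Matrix.charpoly, _root_.eval_det, matPolyEquiv_charmatrix]
  have h1 : eval ((scalar (Fin 4)) μ) (X - C A) = scalar (Fin 4) μ - A := by simp
  have h2 : algebraMap ℂ (Matrix (Fin 4) (Fin 4) ℂ) μ = scalar (Fin 4) μ := rfl
  rw [h1, h2, Matrix.isUnit_iff_isUnit_det, isUnit_iff_ne_zero, not_ne_iff]

set_option maxHeartbeats 1000000 in
lemma Mquintic_charpoly : Mquintic.charpoly = X ^ 4 - 9 * X ^ 3 + 11 * X ^ 2 - 9 * X + 1 := by
  have h : Mquintic.charmatrix = !![X - C 6, C (20/3), C (-5), C 5;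
      C 1, X - C 1, 0, 0;
      C (-1/2), C 1, X - C 1, 0;
      C (1/6), C (-1/2), C 1, X - C 1] := by
    ext i j
    fin_cases i <;> fin_cases j <;>
      simp [charmatrix_apply, Mquintic, diagonal, ← map_neg] <;> norm_num
  rw [Matrix.charpoly, h]
  norm_num [Matrix.det_succ_row_zero, Fin.sum_univ_succ, Matrix.det_fin_three, Fin.succAbove,
    show ((2:Fin 3).castSucc : Fin 4) = 2 from rfl, Matrix.cons_val_two, Matrix.cons_val_three]
  apply Polynomial.funext
  intro x
  simp
  ring

lemma hr0 : (0:ℝ) ≤ Real.sqrt 5 := Real.sqrt_nonneg 5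
lemma hr : (Real.sqrt 5) ^ 2 = 5 := Real.sq_sqrt (by norm_num)
lemma hs0 : (0:ℝ) ≤ Real.sqrt (110 + 54 * Real.sqrt 5) := Real.sqrt_nonneg _
lemma hs : (Real.sqrt (110 + 54 * Real.sqrt 5)) ^ 2 = 110 + 54 * Real.sqrt 5 :=
  Real.sq_sqrt (by nlinarith [hr0])
lemma ht : (Real.sqrt (-110 + 54 * Real.sqrt 5)) ^ 2 = -110 + 54 * Real.sqrt 5 :=
  Real.sq_sqrt (by nlinarith [hr, hr0])
lemma htpos : (0:ℝ) < Real.sqrt (-110 + 54 * Real.sqrt 5) :=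
  Real.sqrt_pos.mpr (by nlinarith [hr, hr0])
lemma hspos : (0:ℝ) < Real.sqrt (110 + 54 * Real.sqrt 5) :=
  Real.sqrt_pos.mpr (by nlinarith [hr0])
lemma hrC : ((Real.sqrt 5 : ℝ) : ℂ) ^ 2 = 5 := by exact_mod_cast congrArg (Complex.ofReal) hr
lemma hsC : ((Real.sqrt (110 + 54 * Real.sqrt 5) : ℝ) : ℂ) ^ 2
    = 110 + 54 * ((Real.sqrt 5 : ℝ) : ℂ) := by exact_mod_cast congrArg (Complex.ofReal) hs
lemma htC : ((Real.sqrt (-110 + 54 * Real.sqrt 5) : ℝ) : ℂ) ^ 2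
    = -110 + 54 * ((Real.sqrt 5 : ℝ) : ℂ) := by exact_mod_cast congrArg (Complex.ofReal) ht

lemma key (μ : ℂ) : (μ - lam1) * (μ - lam2) * (μ - lam3) * (μ - lam4)
    = μ^4 - 9*μ^3 + 11*μ^2 - 9*μ + 1 := by
  have hrC := hrC; have hsC := hsC; have htC := htC
  set R : ℂ := ((Real.sqrt 5 : ℝ) : ℂ) with hR
  set S : ℂ := ((Real.sqrt (110 + 54 * Real.sqrt 5) : ℝ) : ℂ) with hS
  set T : ℂ := ((Real.sqrt (-110 + 54 * Real.sqrt 5) : ℝ) : ℂ) with hT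
  simp only [lam1, lam2, lam3, lam4]
  push_cast
  rw [← hR, ← hS, ← hT]
  linear_combination
    (-(1/16) * ((μ - (9-3*R)/4)^2 - (T/4)^2*Complex.I^2)) * hsC
    + (-(T^2/16) * ((μ - (9+3*R)/4)^2 - (110+54*R)/16)) * Complex.I_sq
    + ((1/16) * ((μ - (9+3*R)/4)^2 - (110+54*R)/16)) * htC
    + ((9/16)*(((μ-(9-3*R)/4)^2 + (54*R-110)/16) + (μ^2 - ((9+3*R)/2)*μ + 1)) - (9/4)*μ^2) * hrC

lemma h14 : lam1 * lam4 = 1 := by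
  rw [lam1, lam4, ← Complex.ofReal_mul,
    show ((9 + 3 * Real.sqrt 5 + Real.sqrt (110 + 54 * Real.sqrt 5)) / 4) *
      ((9 + 3 * Real.sqrt 5 - Real.sqrt (110 + 54 * Real.sqrt 5)) / 4) = 1 by
    linear_combination (9/16) * hr - (1/16) * hs]
  exact Complex.ofReal_one

lemma h23 : lam2 * lam3 = 1 := by
  rw [lam2, lam3]
  push_cast
  linear_combination (9/16) * hrC + (1/16) * htC
    - (((Real.sqrt (-110 + 54 * Real.sqrt 5) : ℝ) : ℂ)/4)^2 * Complex.I_sq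

lemma lam1_im : lam1.im = 0 := by simp [lam1]
lemma lam4_im : lam4.im = 0 := by simp [lam4]
lemma lam2_im : lam2.im = Real.sqrt (-110 + 54 * Real.sqrt 5) / 4 := by simp [lam2]
lemma lam3_im : lam3.im = -(Real.sqrt (-110 + 54 * Real.sqrt 5) / 4) := by simp [lam3]
lemma lam1_re : lam1.re = (9 + 3 * Real.sqrt 5 + Real.sqrt (110 + 54 * Real.sqrt 5)) / 4 := by
  simp [lam1]
lemma lam4_re : lam4.re = (9 + 3 * Real.sqrt 5 - Real.sqrt (110 + 54 * Real.sqrt 5)) / 4 := by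
  simp [lam4]

lemma lam1_re_gt : 1 < lam1.re := by rw [lam1_re]; nlinarith [hr0, hs0]

lemma distinct : lam1 ≠ lam2 ∧ lam1 ≠ lam3 ∧ lam1 ≠ lam4 ∧ lam2 ≠ lam3 ∧ lam2 ≠ lam4 ∧
    lam3 ≠ lam4 := by
  have ht4 : 0 < Real.sqrt (-110 + 54 * Real.sqrt 5) / 4 := by linarith [htpos]
  refine ⟨?_, ?_, ?_, ?_, ?_, ?_⟩ <;> intro h
  · have := congrArg Complex.im h; rw [lam1_im, lam2_im] at this; linarith
  · have := congrArg Complex.im h; rw [lam1_im, lam3_im] at this; linarith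
  · have := congrArg Complex.re h; rw [lam1_re, lam4_re] at this; linarith [hspos]
  · have := congrArg Complex.im h; rw [lam2_im, lam3_im] at this; linarith
  · have := congrArg Complex.im h; rw [lam2_im, lam4_im] at this; linarith
  · have := congrArg Complex.im h; rw [lam3_im, lam4_im] at this; linarith

lemma habs1 : 1 ≤ ‖lam1‖ := by
  rw [lam1, Complex.norm_real, Real.norm_eq_abs, abs_of_nonneg (by positivity)]
  nlinarith [hr0, hs0]

lemma habs4 : ‖lam4‖ ≤ ‖lam1‖ := by
  have h : ‖lam1‖ * ‖lam4‖ = 1 := by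
    rw [← norm_mul, h14, norm_one]
  nlinarith [habs1, norm_nonneg lam4]

lemma lam3_conj : lam3 = (starRingEnd ℂ) lam2 := by
  rw [lam2, lam3, _root_.map_add, _root_.map_mul, Complex.conj_ofReal, Complex.conj_ofReal,
    Complex.conj_I]
  ring

lemma habs2 : ‖lam2‖ ≤ ‖lam1‖ := by
  have h : ‖lam2‖ * ‖lam2‖ = 1 := by
    rw [show ‖lam2‖ * ‖lam2‖
      = ‖lam2‖ * ‖lam3‖ by rw [lam3_conj, Complex.norm_conj],
      ← norm_mul, h23, norm_one]
  nlinarith [habs1, norm_nonneg lam2]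

lemma habs3 : ‖lam3‖ ≤ ‖lam1‖ := by
  rw [lam3_conj, Complex.norm_conj]; exact habs2

lemma eval_charpoly_map (μ : ℂ) :
    ((Mquintic.map (Rat.cast : ℚ → ℂ)).charpoly).eval μ
      = μ^4 - 9*μ^3 + 11*μ^2 - 9*μ + 1 := by
  rw [show (Mquintic.map (Rat.cast : ℚ → ℂ)) = Mquintic.map ⇑(Rat.castHom ℂ) from rfl,
    Matrix.charpoly_map, Mquintic_charpoly]
  simp [Polynomial.eval_map]

lemma spec_eq : spectrum ℂ (Mquintic.map (Rat.cast : ℚ → ℂ)) = {lam1, lam2, lam3, lam4} := by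
  ext μ
  rw [mem_spectrum_iff_root, eval_charpoly_map, ← key μ]
  simp only [Set.mem_insert_iff, Set.mem_singleton_iff, mul_eq_zero, sub_eq_zero]
  tauto

end QuinticAux

open QuinticAux in
theorem quintic_matrix_eigenvalues :
    -- the characteristic polynomial is `x⁴ − 9x³ + 11x² − 9x + 1`
    Mquintic.charpoly = X ^ 4 - 9 * X ^ 3 + 11 * X ^ 2 - 9 * X + 1 ∧
    -- the eigenvalues over `ℂ` are exactly `λ₁, λ₂, λ₃, λ₄`
    spectrum ℂ (Mquintic.map (Rat.cast : ℚ → ℂ)) = {lam1, lam2, lam3, lam4} ∧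
    -- these four numbers are pairwise distinct
    (lam1 ≠ lam2 ∧ lam1 ≠ lam3 ∧ lam1 ≠ lam4 ∧ lam2 ≠ lam3 ∧ lam2 ≠ lam4 ∧ lam3 ≠ lam4) ∧
    -- `λ₁` is real and `λ₁ > 1`
    (lam1.im = 0 ∧ 1 < lam1.re) ∧
    -- `λ₁λ₄ = 1` and `λ₂λ₃ = 1`
    (lam1 * lam4 = 1 ∧ lam2 * lam3 = 1) ∧
    -- `λ₁` is the spectral radius of `M`
    (∀ μ ∈ spectrum ℂ (Mquintic.map (Rat.cast : ℚ → ℂ)), ‖μ‖ ≤ ‖lam1‖) := by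
  refine ⟨Mquintic_charpoly, spec_eq, distinct, ⟨lam1_im, lam1_re_gt⟩, ⟨h14, h23⟩, ?_⟩
  intro μ hμ
  rw [spec_eq] at hμ
  simp only [Set.mem_insert_iff, Set.mem_singleton_iff] at hμ
  rcases hμ with rfl | rfl | rfl | rfl
  · exact le_refl _
  · exact habs2
  · exact habs3
  · exact habs4

end
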